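/- Let T ∈ B(H) satisfy Δ = T*T − I ≥ 0, and let L = (T*T)⁻¹T* be the left inverse of T with ker L = ker T*. Set D* = (I − LL*)^{1/2}. Then the closure of the range of Δ equals the closure of the range of D*. -/

import Mathlib

open ContinuousLinearMap

local notation "⟪" x ", " y "⟫" => @inner ℂ _ _ x y

lemma ker_orthogonal_range {H : Type*} [NormedAddCommGroup H] [InnerProductSpace ℂ H]
    [CompleteSpace H] {A : H →L[ℂ] H} (hA : IsSelfAdjoint A) :
    (LinearMap.range (A : H →ₗ[ℂ] H))ᗮ = LinearMap.ker (A : H →ₗ[ℂ] H) := by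
  ext x
  simp only [Submodule.mem_orthogonal, LinearMap.mem_range, LinearMap.mem_ker]
  have key : ∀ y : H, ⟪A y, x⟫ = ⟪y, A x⟫ := by
    intro y
    nth_rewrite 1 [← hA.adjoint_eq]
    rw [adjoint_inner_left]
  constructor
  · intro h
    have h1 : ⟪A x, A x⟫ = 0 := by
      have := h (A (A x)) ⟨A x, rfl⟩
      rwa [key (A x)] at this
    exact inner_self_eq_zero.mp h1
  · intro h u hu
    obtain ⟨y, hy⟩ := hu
    simp only [ContinuousLinearMap.coe_coe] at hy
    rw [← hy, key y, show A x = 0 from h, inner_zero_right]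

lemma closure_range_selfAdjoint {H : Type*} [NormedAddCommGroup H] [InnerProductSpace ℂ H]
    [CompleteSpace H] {A : H →L[ℂ] H} (hA : IsSelfAdjoint A) :
    closure (Set.range ⇑A) = ((LinearMap.ker (A : H →ₗ[ℂ] H))ᗮ : Set H) := by
  rw [← ker_orthogonal_range hA, Submodule.orthogonal_orthogonal_eq_closure]
  rfl

theorem stmt4 {H : Type*} [NormedAddCommGroup H] [InnerProductSpace ℂ H] [CompleteSpace H]
    (T S Dstar : H →L[ℂ] H) (hexp : ∀ x : H, ‖x‖ ≤ ‖T x‖)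
    (hS1 : S ∘L (adjoint T ∘L T) = 1) (hS2 : (adjoint T ∘L T) ∘L S = 1)
    (hDpos : Dstar.IsPositive)
    (hDsq : Dstar ∘L Dstar = 1 - (S ∘L adjoint T) ∘L adjoint (S ∘L adjoint T)) :
    closure (Set.range ⇑(adjoint T ∘L T - 1)) = closure (Set.range ⇑Dstar) := by
  have hTT : ∀ x : H, S ((adjoint T) (T x)) = x := by
    intro x
    have := congrArg (fun A : H →L[ℂ] H => A x) hS1
    simpa using this
  have hTTS : ∀ x : H, (adjoint T) (T (S x)) = x := by
    intro x
    have := congrArg (fun A : H →L[ℂ] H => A x) hS2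
    simpa using this
  -- S is self-adjoint
  have hSadj : adjoint S = S := by
    ext x
    have h := congrArg adjoint hS2
    rw [adjoint_comp, adjoint_comp, adjoint_adjoint] at h
    have h' := congrArg (fun A : H →L[ℂ] H => A (S x)) h
    simp only [comp_apply, ← star_eq_adjoint, star_one, one_apply] at h'
    rw [star_eq_adjoint T, hTTS] at h'
    rw [← star_eq_adjoint]
    exact h'
  have hΔsa : IsSelfAdjoint (adjoint T ∘L T - 1) := by
    have h1 : IsSelfAdjoint (adjoint T ∘L T) := IsSelfAdjoint.star_mul_self T
    exact h1.sub (IsSelfAdjoint.one _)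
  have hDsa : IsSelfAdjoint Dstar := hDpos.isSelfAdjoint
  -- Dstar² = 1 - S
  have hD2 : ∀ x : H, Dstar (Dstar x) = x - S x := by
    intro x
    have := congrArg (fun A : H →L[ℂ] H => A x) hDsq
    simp only [comp_apply, sub_apply, one_apply, adjoint_comp, adjoint_adjoint, hSadj] at this
    rw [this, hTTS]
    rfl
  -- ker equality
  have hker : LinearMap.ker ((adjoint T ∘L T - 1 : H →L[ℂ] H) : H →ₗ[ℂ] H)
      = LinearMap.ker ((Dstar : H →L[ℂ] H) : H →ₗ[ℂ] H) := by
    ext x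
    simp only [LinearMap.mem_ker, ContinuousLinearMap.coe_coe]
    have hΔx : (adjoint T ∘L T - 1) x = (adjoint T) (T x) - x := rfl
    constructor
    · intro h
      rw [hΔx, sub_eq_zero] at h
      have h2 : S x = x := by
        calc S x = S ((adjoint T) (T x)) := by rw [h]
          _ = x := hTT x
      have h3 : Dstar (Dstar x) = 0 := by rw [hD2, h2, sub_self]
      have h4 : ⟪Dstar x, Dstar x⟫ = 0 := by
        rw [← adjoint_inner_left, hDsa.adjoint_eq, h3, inner_zero_left]
      exact inner_self_eq_zero.mp h4
    · intro h
      have h3 : S x = x := by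
        have := hD2 x
        rw [h, map_zero] at this
        exact (sub_eq_zero.mp this.symm).symm
      rw [hΔx, sub_eq_zero]
      calc (adjoint T) (T x) = (adjoint T) (T (S x)) := by rw [h3]
        _ = x := hTTS x
  rw [closure_range_selfAdjoint hΔsa, closure_range_selfAdjoint hDsa, hker]
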